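/- Let n ≥ 1 and let p : Matrix n n ℂ → ℂ be a differentiable function which is invariant under conjugation, i.e. p(g · A · g⁻¹) = p(A) for every invertible matrix g and every A. Then for all v, X ∈ Matrix n n ℂ, the derivative of p at v in the direction of the commutator [X, v] = X·v − v·X vanishes: (fderiv ℂ p v)(X·v − v·X) = 0. (This is the paper's Lemma for G = GL(n, ℂ): the Lie derivative of a G-invariant function vanishes in any direction tangent to a G-orbit.) -/

import Mathlib

attribute [local instance] Matrix.normedAddCommGroup Matrix.normedSpace

/-- Let `n ≥ 1` and let `p : Matrix n n ℂ → ℂ` be a differentiable function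
invariant under conjugation, i.e. `p(g·A·g⁻¹) = p(A)` for every invertible `g` and every
`A`.  Then for all `v, X`, the derivative of `p` at `v` in the direction of the
commutator `[X, v] = X·v − v·X` vanishes. -/
theorem fderiv_conj_invariant_vanishes_on_commutator
    {n : ℕ} (hn : 1 ≤ n)
    (p : Matrix (Fin n) (Fin n) ℂ → ℂ)
    (hdiff : Differentiable ℂ p)
    (hinv : ∀ g : Matrix (Fin n) (Fin n) ℂ, IsUnit g →
      ∀ A : Matrix (Fin n) (Fin n) ℂ, p (g * A * g⁻¹) = p A)
    (v X : Matrix (Fin n) (Fin n) ℂ) :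
    fderiv ℂ p v (X * v - v * X) = 0 := by
  -- the matrices `1 + t • X` are invertible for `t` near `0`
  have hdet : Continuous fun t : ℂ => (1 + t • X).det :=
    (continuous_const.add (continuous_id.smul continuous_const)).matrix_det
  have hU : ∀ᶠ t in nhds (0 : ℂ), IsUnit (1 + t • X) := by
    have h0 : (1 + (0 : ℂ) • X).det ≠ 0 := by simp
    filter_upwards [hdet.continuousAt.eventually_ne h0] with t ht
    exact (Matrix.isUnit_iff_isUnit_det _).mpr (isUnit_iff_ne_zero.mpr ht)
  -- key identity: `p ((1+tX) v) = p (v (1+tX))` for `t` near `0`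
  have key : (fun t : ℂ => p ((1 + t • X) * v)) =ᶠ[nhds (0 : ℂ)]
      fun t : ℂ => p (v * (1 + t • X)) := by
    filter_upwards [hU] with t ht
    have hdet' := (Matrix.isUnit_iff_isUnit_det _).mp ht
    have := hinv _ ht (v * (1 + t • X))
    rw [show (1 + t • X) * (v * (1 + t • X)) * (1 + t • X)⁻¹
        = (1 + t • X) * v * ((1 + t • X) * (1 + t • X)⁻¹) by rw [← mul_assoc _ v, mul_assoc],
      Matrix.mul_nonsing_inv _ hdet', mul_one] at this
    exact this
  -- derivatives of the two sides at 0
  have hfd : HasFDerivAt p (fderiv ℂ p v) v := (hdiff v).hasFDerivAt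
  have h1 : HasDerivAt (fun t : ℂ => (1 + t • X) * v) (X * v) 0 := by
    have : (fun t : ℂ => (1 + t • X) * v) = fun t : ℂ => v + t • (X * v) := by
      funext t
      simp [add_mul, Matrix.smul_mul]
    rw [this]
    have h := ((hasDerivAt_id' (0 : ℂ)).smul_const (X * v)).const_add v
    rwa [one_smul] at h
  have h2 : HasDerivAt (fun t : ℂ => v * (1 + t • X)) (v * X) 0 := by
    have : (fun t : ℂ => v * (1 + t • X)) = fun t : ℂ => v + t • (v * X) := by
      funext t
      simp [mul_add, Matrix.mul_smul]
    rw [this]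
    have h := ((hasDerivAt_id' (0 : ℂ)).smul_const (v * X)).const_add v
    rwa [one_smul] at h
  have hf : HasDerivAt (fun t : ℂ => p ((1 + t • X) * v)) (fderiv ℂ p v (X * v)) 0 := by
    have : (1 + (0 : ℂ) • X) * v = v := by simp
    have hfd' : HasFDerivAt p (fderiv ℂ p v) ((1 + (0 : ℂ) • X) * v) := by
      rw [this]; exact hfd
    exact hfd'.comp_hasDerivAt 0 h1
  have hg : HasDerivAt (fun t : ℂ => p (v * (1 + t • X))) (fderiv ℂ p v (v * X)) 0 := by
    have : v * (1 + (0 : ℂ) • X) = v := by simp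
    have hfd' : HasFDerivAt p (fderiv ℂ p v) (v * (1 + (0 : ℂ) • X)) := by
      rw [this]; exact hfd
    exact hfd'.comp_hasDerivAt 0 h2
  have hg' : HasDerivAt (fun t : ℂ => p ((1 + t • X) * v)) (fderiv ℂ p v (v * X)) 0 :=
    hg.congr_of_eventuallyEq key
  have heq : fderiv ℂ p v (X * v) = fderiv ℂ p v (v * X) := hf.unique hg'
  rw [map_sub, heq, sub_self]
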